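/- Suppose P, Q, R ∈ GL(2,ℂ) are reflections (each has eigenvalues 1 and −1; equivalently tr = 0 and det = −1), and their product M = P·Q·R is parabolic: there exists λ ∈ ℂ with |λ| = 1 such that tr(M) = 2λ, det(M) = λ², and M ≠ λ • 1 (M is not diagonalizable). Let G be the group generated by P, Q, and R. Then the following are equivalent: (1) G is unitary; (2) tr(P·Q), tr(Q·R), and tr(P·R) are all real; (3) t₁ = tr(P·Q) and t₂ = tr(Q·R) are real and satisfy (t₁² − 4)(t₂² − 4) ≥ 16. -/

import Mathlib

open Matrix Complex

/-- A set of invertible 2×2 complex matrices is *unitary* if it preserves some nondegenerate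
Hermitian form `H` under `g ↦ gᴴ H g`. -/
def IsUnitaryMatrixGroup (S : Set (Matrix (Fin 2) (Fin 2) ℂ)) : Prop :=
  ∃ H : Matrix (Fin 2) (Fin 2) ℂ, H.IsHermitian ∧ H.det ≠ 0 ∧ ∀ g ∈ S, gᴴ * H * g = H

namespace BeukersAux

abbrev M2 := Matrix (Fin 2) (Fin 2) ℂ

lemma CH2 (A : M2) : A * A = A.trace • A - A.det • 1 := by
  ext i j
  fin_cases i <;> fin_cases j <;>
    simp [Matrix.mul_apply, Fin.sum_univ_two, Matrix.trace_fin_two, Matrix.det_fin_two,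
      Matrix.one_apply] <;> ring

lemma invol (A : M2) (h1 : A.trace = 0) (h2 : A.det = -1) : A * A = 1 := by
  rw [CH2, h1, h2]; simp

lemma trace_identity (p q r : M2) (hp : p * p = 1) (hq : q * q = 1) (hr : r * r = 1)
    (hdp : p.det = -1) (hdq : q.det = -1) (hdr : r.det = -1) (l : ℂ)
    (htr : (p * q * r).trace = 2 * l) (hdet : (p * q * r).det = l ^ 2) :
    (p*r).trace ^ 2 - (p*q).trace * (q*r).trace * (p*r).trace
      + (p*q).trace ^ 2 + (q*r).trace ^ 2 = 0 := by
  set x := (p*q).trace with hx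
  set y := (q*r).trace with hy
  set z := (p*r).trace with hz
  have hl2 : l ^ 2 = -1 := by
    rw [← hdet, Matrix.det_mul, Matrix.det_mul, hdp, hdq, hdr]; ring
  have hdpq : (p*q).det = 1 := by rw [Matrix.det_mul, hdp, hdq]; ring
  have hdqr : (q*r).det = 1 := by rw [Matrix.det_mul, hdq, hdr]; ring
  have hdpr : (p*r).det = 1 := by rw [Matrix.det_mul, hdp, hdr]; ring
  have hrp : r * p = z • 1 - p * r := by
    have h1 : (r * p) * (p * r) = 1 := by
      calc (r*p)*(p*r) = r * (p*p) * r := by noncomm_ring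
      _ = 1 := by rw [hp, mul_one, hr]
    have h2 : (p * r) * (z • 1 - p * r) = 1 := by
      have hch := CH2 (p*r)
      rw [hdpr, ← hz] at hch
      rw [mul_sub, hch]
      simp [mul_smul_comm]
    have h3 : r * p * ((p * r) * (z • 1 - p * r)) = r * p := by rw [h2, mul_one]
    calc r * p = r * p * ((p * r) * (z • 1 - p * r)) := h3.symm
    _ = ((r*p)*(p*r)) * (z • 1 - p*r) := (mul_assoc _ _ _).symm
    _ = z • 1 - p * r := by rw [h1, one_mul]
  have hAB : (p*q) * (q*r) = p * r := by
    calc (p*q)*(q*r) = p * (q*q) * r := by noncomm_ring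
    _ = p * r := by rw [hq, mul_one]
  have hm2 : (p*q*r) * (p*q*r) = z • (p*r) - ((p*q)*(p*q)) * ((q*r)*(q*r)) := by
    calc (p*q*r) * (p*q*r) = (p*q) * ((r*p) * (q*r)) := by noncomm_ring
    _ = (p*q) * ((z • 1 - p*r) * (q*r)) := by rw [hrp]
    _ = z • ((p*q)*(q*r)) - (p*q) * ((p*r)*(q*r)) := by
        simp only [sub_mul, smul_mul_assoc, one_mul, mul_sub, mul_smul_comm]
    _ = z • (p*r) - (p*q) * (((p*q)*(q*r))*(q*r)) := by rw [hAB]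
    _ = z • (p*r) - ((p*q)*(p*q)) * ((q*r)*(q*r)) := by simp only [mul_assoc]
  have hA2 : (p*q)*(p*q) = x • (p*q) - 1 := by
    have hch := CH2 (p*q); rw [hdpq, one_smul, ← hx] at hch; exact hch
  have hB2 : (q*r)*(q*r) = y • (q*r) - 1 := by
    have hch := CH2 (q*r); rw [hdqr, one_smul, ← hy] at hch; exact hch
  have t1 : (p*q*r).trace ^ 2 - 2 * (p*q*r).det = ((p*q*r)*(p*q*r)).trace := by
    have hch := congrArg Matrix.trace (CH2 (p*q*r))
    simp only [Matrix.trace_sub, Matrix.trace_smul, Matrix.trace_one, smul_eq_mul, Fintype.card_fin] at hch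
    rw [hch]; push_cast; ring
  have t2 : ((p*q*r)*(p*q*r)).trace = z*z - (x*y*z - x*x - y*y + 2) := by
    rw [hm2, hA2, hB2]
    have expand : (x • (p*q) - 1) * (y • (q*r) - 1)
        = (x*y) • ((p*q)*(q*r)) - x • (p*q) - y • (q*r) + 1 := by
      simp only [sub_mul, mul_sub, one_mul, mul_one, smul_mul_assoc, mul_smul_comm, smul_smul]
      module
    rw [expand, hAB]
    simp only [Matrix.trace_sub, Matrix.trace_add, Matrix.trace_smul, Matrix.trace_one,
      smul_eq_mul, Fintype.card_fin, ← hx, ← hy, ← hz]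
    push_cast; ring
  rw [htr, hdet] at t1
  rw [t2] at t1
  linear_combination -t1 + 2 * hl2

lemma jordanize (m : M2) (l : ℂ) (htr : m.trace = 2 * l) (hdet : m.det = l ^ 2)
    (hne : m ≠ l • 1) :
    ∃ T Ti : M2, Ti * T = 1 ∧ T * Ti = 1 ∧ Ti * m * T = !![l, 1; 0, l] := by
  have hNN : (m - l • 1) * (m - l • 1) = 0 := by
    have hm2 : m * m = (2*l) • m - (l^2) • 1 := by rw [CH2, htr, hdet]
    have h1 : (m - l • 1) * (m - l • 1) = m*m - (2*l) • m + (l*l) • 1 := by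
      simp only [sub_mul, mul_sub, smul_mul_assoc, mul_smul_comm, smul_smul, mul_one, one_mul]
      module
    rw [h1, hm2, show l * l = l ^ 2 by ring]
    module
  obtain ⟨n0, hn0⟩ : ∃ a, m 0 0 - l = a := ⟨_, rfl⟩
  obtain ⟨n1, hn1⟩ : ∃ a, m 0 1 = a := ⟨_, rfl⟩
  obtain ⟨n2, hn2⟩ : ∃ a, m 1 0 = a := ⟨_, rfl⟩
  have hN11 : m 1 1 = l - n0 := by
    have h := htr
    rw [Matrix.trace_fin_two] at h
    linear_combination h - hn0
  have hmeta : m = !![n0 + l, n1; n2, l - n0] := by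
    rw [eta_fin_two m, hN11, hn1, hn2, ← hn0]; norm_num
  have h00 : n0*n0 + n1*n2 = 0 := by
    have h := congrFun (congrFun hNN 0) 0
    rw [hmeta] at h
    simpa [Matrix.mul_apply, Fin.sum_univ_two, Matrix.one_apply] using h
  rw [hmeta]
  by_cases hc : n2 = 0
  · have h0 : n0 = 0 := by
      have : n0 * n0 = 0 := by rw [hc] at h00; linear_combination h00
      exact mul_self_eq_zero.mp this
    have h01 : n1 ≠ 0 := by
      intro hne01
      apply hne
      rw [hmeta, h0, hc, hne01]
      ext i j; fin_cases i <;> fin_cases j <;> simp [Matrix.one_apply]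
    rw [h0, hc]
    refine ⟨!![n1, 0; 0, 1], !![n1⁻¹, 0; 0, 1], ?_, ?_, ?_⟩
    · ext i j; fin_cases i <;> fin_cases j <;>
        simp [Matrix.mul_apply, Fin.sum_univ_two, Matrix.one_apply, inv_mul_cancel₀ h01]
    · ext i j; fin_cases i <;> fin_cases j <;>
        simp [Matrix.mul_apply, Fin.sum_univ_two, Matrix.one_apply, mul_inv_cancel₀ h01]
    · ext i j; fin_cases i <;> fin_cases j <;>
        simp [Matrix.mul_apply, Fin.sum_univ_two, inv_mul_cancel₀ h01, mul_inv_cancel₀ h01]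
      all_goals (try field_simp)
  · have hTiT : (!![0, n2⁻¹; 1, -n0*n2⁻¹] : M2) * !![n0, 1; n2, 0] = 1 := by
      ext i j; fin_cases i <;> fin_cases j <;>
        simp [Matrix.mul_apply, Fin.sum_univ_two, Matrix.one_apply, Matrix.smul_apply,
          smul_eq_mul]
      all_goals (try field_simp)
      all_goals ring1
    have hMT : !![n0 + l, n1; n2, l - n0] * !![n0, 1; n2, 0]
        = !![n0, 1; n2, 0] * !![l, 1; 0, l] := by
      ext i j; fin_cases i <;> fin_cases j <;>
        simp [Matrix.mul_apply, Fin.sum_univ_two]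
      all_goals first | ring1 | linear_combination h00 | linear_combination -h00
    refine ⟨!![n0, 1; n2, 0], !![0, n2⁻¹; 1, -n0*n2⁻¹], hTiT, ?_, ?_⟩
    · ext i j; fin_cases i <;> fin_cases j <;>
        simp [Matrix.mul_apply, Fin.sum_univ_two, Matrix.one_apply, Matrix.smul_apply,
          smul_eq_mul]
      all_goals (try field_simp)
      all_goals first | ring1 | linear_combination h00 | linear_combination -h00 | linear_combination n2 * h00 | linear_combination (-n2) * h00 | linear_combination n2^2 * h00 | linear_combination (-n2^2) * h00 | linear_combination n2⁻¹ * h00 | linear_combination (-n2⁻¹) * h00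
    · rw [mul_assoc, hMT, ← mul_assoc, hTiT, one_mul]

lemma conj_sandwich {T Ti A B : M2} (h : T * Ti = 1) :
    (Ti*A*T)*(Ti*B*T) = Ti*(A*B)*T := by
  calc (Ti*A*T)*(Ti*B*T) = Ti*(A*((T*Ti)*(B*T))) := by simp only [mul_assoc]
  _ = Ti*(A*(B*T)) := by rw [h, one_mul]
  _ = Ti*(A*B)*T := by simp only [mul_assoc]

lemma trace_sandwich {T Ti A : M2} (h : T * Ti = 1) : (Ti*A*T).trace = A.trace := by
  rw [Matrix.trace_mul_comm, ← mul_assoc, h, one_mul]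

lemma det_sandwich {T Ti A : M2} (h : T * Ti = 1) : (Ti*A*T).det = A.det := by
  have h1 : T.det * Ti.det = 1 := by rw [← Matrix.det_mul, h, Matrix.det_one]
  rw [Matrix.det_mul, Matrix.det_mul]
  calc Ti.det * A.det * T.det = (T.det * Ti.det) * A.det := by ring
  _ = A.det := by rw [h1, one_mul]

lemma unsandwich {T Ti A B : M2} (h : T * Ti = 1) (hd : B = Ti*A*T) : T*B*Ti = A := by
  rw [hd]
  calc T*(Ti*A*T)*Ti = (T*Ti)*(A*(T*Ti)) := by simp only [mul_assoc]
  _ = A := by rw [h, one_mul, mul_one]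

lemma transport {T Ti B H' : M2} (hTiT : Ti*T = 1) (hcond : Bᴴ*H'*B = H') :
    (T*B*Ti)ᴴ*(Tiᴴ*H'*Ti)*(T*B*Ti) = Tiᴴ*H'*Ti := by
  have e : Tᴴ * Tiᴴ = 1 := by rw [← Matrix.conjTranspose_mul, hTiT, Matrix.conjTranspose_one]
  have e1 : ∀ X : M2, Tᴴ*(Tiᴴ*X) = X := fun X => by rw [← mul_assoc, e, one_mul]
  have e2 : ∀ X : M2, Ti*(T*X) = X := fun X => by rw [← mul_assoc, hTiT, one_mul]
  have hcond' : Bᴴ*(H'*B) = H' := by rw [← mul_assoc]; exact hcond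
  simp only [Matrix.conjTranspose_mul, mul_assoc]
  rw [e1, e2, show Bᴴ*(H'*(B*Ti)) = (Bᴴ*(H'*B))*Ti from by simp only [mul_assoc], hcond']

lemma aux23a (a b c : ℝ) (h : c^2 - a*b*c + a^2 + b^2 = 0) : (a^2-4)*(b^2-4) ≥ 16 := by
  nlinarith [sq_nonneg (2*c - a*b)]

lemma aux23b (a b : ℝ) (z : ℂ) (h : z^2 - (a*b:ℝ)*z + ((a^2 + b^2 : ℝ):ℂ) = 0)
    (hineq : (a^2-4)*(b^2-4) ≥ 16) : z.im = 0 := by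
  have him := congrArg Complex.im h
  have hre := congrArg Complex.re h
  simp [pow_two, Complex.mul_im, Complex.mul_re, Complex.ofReal_mul] at him hre
  by_contra hv
  have h2u : 2 * z.re = a * b := by
    rcases mul_eq_zero.1 (show (2*z.re - a*b) * z.im = 0 by linear_combination him) with h' | h'
    · linarith
    · exact absurd h' hv
  have hpos : z.im * z.im > 0 := mul_self_pos.mpr hv
  nlinarith [hre, h2u, hineq, hpos]

lemma sandwich_mul' {A B H : M2} : (A*B)ᴴ*H*(A*B) = Bᴴ*(Aᴴ*H*A)*B := by
  simp only [Matrix.conjTranspose_mul]; noncomm_ring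

lemma real_trace_of_unitary (p q H : M2) (hp : p*p = 1) (hq : q*q = 1)
    (hdet : H.det ≠ 0) (hP : pᴴ*H*p = H) (hQ : qᴴ*H*q = H) : ((p*q).trace).im = 0 := by
  have hU : IsUnit H.det := Ne.isUnit hdet
  have hHHi : H * H⁻¹ = 1 := Matrix.mul_nonsing_inv H hU
  have hHiH : H⁻¹ * H = 1 := Matrix.nonsing_inv_mul H hU
  have pH : pᴴ*H = H*p := by
    have h1 : pᴴ*H*(p*p) = H*p := by rw [← mul_assoc, hP]
    rwa [hp, mul_one] at h1
  have qH : qᴴ*H = H*q := by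
    have h1 : qᴴ*H*(q*q) = H*q := by rw [← mul_assoc, hQ]
    rwa [hq, mul_one] at h1
  have key : (q*p)ᴴ*H = H*(p*q) := by
    rw [Matrix.conjTranspose_mul]
    calc pᴴ*qᴴ*H = pᴴ*(qᴴ*H) := by rw [mul_assoc]
    _ = pᴴ*(H*q) := by rw [qH]
    _ = (pᴴ*H)*q := by rw [mul_assoc]
    _ = (H*p)*q := by rw [pH]
    _ = H*(p*q) := by rw [mul_assoc]
  have key2 : (q*p)ᴴ = H*(p*q)*H⁻¹ := by
    calc (q*p)ᴴ = (q*p)ᴴ*(H*H⁻¹) := by rw [hHHi, mul_one]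
    _ = ((q*p)ᴴ*H)*H⁻¹ := by rw [mul_assoc]
    _ = (H*(p*q))*H⁻¹ := by rw [key]
  have htr := congrArg Matrix.trace key2
  rw [Matrix.trace_conjTranspose, Matrix.trace_mul_comm, Matrix.trace_mul_comm (H*(p*q)) H⁻¹,
    ← mul_assoc, hHiH, one_mul] at htr
  -- htr : star (p*q).trace = (p*q).trace
  have : (starRingEnd ℂ) ((p*q).trace) = (p*q).trace := htr
  exact Complex.conj_eq_iff_im.mp this

lemma sandwich_mul {A B H : M2} : (A*B)ᴴ*H*(A*B) = Bᴴ*(Aᴴ*H*A)*B := by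
  simp only [Matrix.conjTranspose_mul]; noncomm_ring

lemma prod3 {A B C H : M2} (ha : Aᴴ*H*A = H) (hb : Bᴴ*H*B = H) (hc : Cᴴ*H*C = H) :
    (A*B*C)ᴴ*H*(A*B*C) = H := by
  rw [sandwich_mul (A := A*B) (B := C), sandwich_mul (A := A) (B := B), ha, hb, hc]

lemma construct (p q r : M2)
    (hp : p*p = 1) (hq : q*q = 1) (hr : r*r = 1)
    (htp : p.trace = 0) (htq : q.trace = 0) (htr0 : r.trace = 0)
    (hdp : p.det = -1) (hdq : q.det = -1) (hdr : r.det = -1)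
    (l : ℂ) (htr : (p*q*r).trace = 2*l) (hdet : (p*q*r).det = l^2) (hne : p*q*r ≠ l•1)
    (hx : ((p*q).trace).im = 0) (hy : ((q*r).trace).im = 0) (hz : ((p*r).trace).im = 0) :
    ∃ H : M2, H.IsHermitian ∧ H.det ≠ 0 ∧ pᴴ*H*p = H ∧ qᴴ*H*q = H ∧ rᴴ*H*r = H := by
  obtain ⟨a, hxa⟩ : ∃ a : ℝ, (p*q).trace = (a:ℂ) :=
    ⟨((p*q).trace).re, by apply Complex.ext <;> simp [hx]⟩
  obtain ⟨b, hyb⟩ : ∃ b : ℝ, (q*r).trace = (b:ℂ) :=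
    ⟨((q*r).trace).re, by apply Complex.ext <;> simp [hy]⟩
  obtain ⟨c, hzc⟩ : ∃ c : ℝ, (p*r).trace = (c:ℂ) :=
    ⟨((p*r).trace).re, by apply Complex.ext <;> simp [hz]⟩
  have hl2 : l^2 = -1 := by
    rw [← hdet, Matrix.det_mul, Matrix.det_mul, hdp, hdq, hdr]; ring
  have hlne : l ≠ 0 := by
    intro h0; rw [h0] at hl2; norm_num at hl2
  have hconjl : (starRingEnd ℂ) l = -l := by
    have hfac : (l - I)*(l + I) = 0 := by linear_combination hl2 - Complex.I_sq
    rcases mul_eq_zero.mp hfac with h | h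
    · rw [sub_eq_zero.mp h]; simp
    · rw [eq_neg_of_add_eq_zero_left h]; simp
  obtain ⟨T, Ti, hTiT, hTTi, hmT⟩ := jordanize (p*q*r) l htr hdet hne
  obtain ⟨p1, hp1d⟩ : ∃ v, (Ti*p*T) 0 0 = v := ⟨_, rfl⟩
  obtain ⟨p2, hp2d⟩ : ∃ v, (Ti*p*T) 0 1 = v := ⟨_, rfl⟩
  obtain ⟨p3, hp3d⟩ : ∃ v, (Ti*p*T) 1 0 = v := ⟨_, rfl⟩
  obtain ⟨r1, hr1d⟩ : ∃ v, (Ti*r*T) 0 0 = v := ⟨_, rfl⟩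
  obtain ⟨r2, hr2d⟩ : ∃ v, (Ti*r*T) 0 1 = v := ⟨_, rfl⟩
  obtain ⟨r3, hr3d⟩ : ∃ v, (Ti*r*T) 1 0 = v := ⟨_, rfl⟩
  have htrp' : (Ti*p*T).trace = 0 := by rw [trace_sandwich hTTi, htp]
  have htrr' : (Ti*r*T).trace = 0 := by rw [trace_sandwich hTTi, htr0]
  have hpeta : Ti*p*T = !![p1, p2; p3, -p1] := by
    rw [Matrix.trace_fin_two] at htrp'
    rw [eta_fin_two (Ti*p*T), hp1d, hp2d, hp3d,
      show (Ti*p*T) 1 1 = -p1 from by rw [← hp1d]; linear_combination htrp']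
  have hreta : Ti*r*T = !![r1, r2; r3, -r1] := by
    rw [Matrix.trace_fin_two] at htrr'
    rw [eta_fin_two (Ti*r*T), hr1d, hr2d, hr3d,
      show (Ti*r*T) 1 1 = -r1 from by rw [← hr1d]; linear_combination htrr']
  -- E1 : p3 = b
  have hpm : p*(p*q*r) = q*r := by
    calc p*(p*q*r) = (p*p)*(q*r) := by noncomm_ring
    _ = q*r := by rw [hp, one_mul]
  have hE1 : p3 = (b:ℂ) := by
    have h1 : (Ti*p*T) * !![l,1;0,l] = Ti*(p*(p*q*r))*T := by
      rw [← hmT, conj_sandwich hTTi]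
    have h2 := congrArg Matrix.trace h1
    rw [trace_sandwich hTTi, hpm, hyb, hpeta] at h2
    rw [Matrix.trace_fin_two] at h2
    simp [Matrix.mul_apply, Fin.sum_univ_two] at h2
    linear_combination h2
  -- E2 : r3 = a
  have hrm : r*(p*q*r) = r*(p*q)*r := by noncomm_ring
  have hE2 : r3 = (a:ℂ) := by
    have h1 : (Ti*r*T) * !![l,1;0,l] = Ti*(r*(p*q*r))*T := by
      rw [← hmT, conj_sandwich hTTi]
    have h2 := congrArg Matrix.trace h1
    have h3 : (r*(p*q*r)).trace = (a:ℂ) := by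
      rw [hrm, Matrix.trace_mul_comm, show r*(r*(p*q)) = (r*r)*(p*q) from by noncomm_ring,
        hr, one_mul, hxa]
    rw [trace_sandwich hTTi, h3, hreta] at h2
    rw [Matrix.trace_fin_two] at h2
    simp [Matrix.mul_apply, Fin.sum_univ_two] at h2
    linear_combination h2
  -- E3, E4 : determinants
  have hE3 : p1*p1 + p2*p3 = 1 := by
    have h1 : (Ti*p*T).det = -1 := by rw [det_sandwich hTTi, hdp]
    rw [hpeta, Matrix.det_fin_two] at h1
    simp at h1
    linear_combination -h1
  have hE4 : r1*r1 + r2*r3 = 1 := by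
    have h1 : (Ti*r*T).det = -1 := by rw [det_sandwich hTTi, hdr]
    rw [hreta, Matrix.det_fin_two] at h1
    simp at h1
    linear_combination -h1
  -- E5 : trace(p' r') = c
  have hE5 : 2*p1*r1 + p2*r3 + p3*r2 = (c:ℂ) := by
    have h1 := conj_sandwich (A := p) (B := r) hTTi
    have h2 := congrArg Matrix.trace h1
    rw [trace_sandwich hTTi, hzc, hpeta, hreta] at h2
    rw [Matrix.trace_fin_two] at h2
    simp [Matrix.mul_apply, Fin.sum_univ_two] at h2
    linear_combination h2
  -- E6 : trace(p' J r') = 0 gives l*c + p1*a - b*r1 = 0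
  have hpmr : p*(p*q*r)*r = q := by
    calc p*(p*q*r)*r = (p*p)*q*(r*r) := by noncomm_ring
    _ = q := by rw [hp, hr, one_mul, mul_one]
  have hE6 : l*(c:ℂ) + p1*(a:ℂ) - (b:ℂ)*r1 = 0 := by
    have h1 : (Ti*p*T) * !![l,1;0,l] * (Ti*r*T) = Ti*(p*(p*q*r)*r)*T := by
      rw [← hmT, conj_sandwich hTTi, conj_sandwich hTTi]
    have h2 := congrArg Matrix.trace h1
    rw [trace_sandwich hTTi, hpmr, htq, hpeta, hreta] at h2
    rw [Matrix.trace_fin_two] at h2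
    simp [Matrix.mul_apply, Fin.sum_univ_two] at h2
    linear_combination h2 - l*hE5 - p1*hE2 + r1*hE1
  -- conjugated equations
  have hE3c : (starRingEnd ℂ) p1 * (starRingEnd ℂ) p1
      + (starRingEnd ℂ) p2 * (b:ℂ) = 1 := by
    have h := congrArg (starRingEnd ℂ) hE3
    simpa [map_add, _root_.map_mul, hE1, Complex.conj_ofReal] using h
  have hE4c : (starRingEnd ℂ) r1 * (starRingEnd ℂ) r1
      + (starRingEnd ℂ) r2 * (a:ℂ) = 1 := by
    have h := congrArg (starRingEnd ℂ) hE4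
    simpa [map_add, _root_.map_mul, hE2, Complex.conj_ofReal] using h
  have hE6c : -(l*(c:ℂ)) + (starRingEnd ℂ) p1 * (a:ℂ)
      - (b:ℂ)*(starRingEnd ℂ) r1 = 0 := by
    have h := congrArg (starRingEnd ℂ) hE6
    simpa [map_add, map_sub, _root_.map_mul, hconjl, Complex.conj_ofReal] using h
  have hsum : (a:ℂ)*(p1 + (starRingEnd ℂ) p1) = (b:ℂ)*(r1 + (starRingEnd ℂ) r1) := by
    linear_combination hE6 + hE6c
  -- nondegeneracy
  have hbne : (b:ℂ) ≠ 0 := by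
    intro hb0
    have hp3z : p3 = 0 := by rw [hE1, hb0]
    have hp1sq : p1*p1 = 1 := by rw [hp3z] at hE3; linear_combination hE3
    have hp1c : (starRingEnd ℂ) p1 = p1 := by
      rcases mul_self_eq_one_iff.mp hp1sq with h | h <;> rw [h] <;> simp
    have hp1ne : p1 ≠ 0 := by
      intro h0; rw [h0] at hp1sq; norm_num at hp1sq
    have haz : (a:ℂ) = 0 := by
      have h := hsum
      rw [hb0, hp1c, zero_mul] at h
      rcases mul_eq_zero.mp h with h | h
      · exact h
      · exact absurd (show p1 = 0 by linear_combination h/2) hp1ne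
    have hcz : (c:ℂ) = 0 := by
      have h := hE6
      rw [hb0, haz] at h
      have h' : l * (c:ℂ) = 0 := by linear_combination h
      rcases mul_eq_zero.mp h' with h'' | h''
      · exact absurd h'' hlne
      · exact h''
    have hr3z : r3 = 0 := by rw [hE2, haz]
    have hr1sq : r1*r1 = 1 := by rw [hr3z] at hE4; linear_combination hE4
    have h5 := hE5
    rw [hp3z, hr3z, hcz] at h5
    have : p1 * r1 = 0 := by linear_combination h5/2
    rcases mul_eq_zero.mp this with h | h
    · exact hp1ne h
    · rw [h] at hr1sq; norm_num at hr1sq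
  have hane : (a:ℂ) ≠ 0 := by
    intro ha0
    have hr3z : r3 = 0 := by rw [hE2, ha0]
    have hr1sq : r1*r1 = 1 := by rw [hr3z] at hE4; linear_combination hE4
    have hr1c : (starRingEnd ℂ) r1 = r1 := by
      rcases mul_self_eq_one_iff.mp hr1sq with h | h <;> rw [h] <;> simp
    have hr1ne : r1 ≠ 0 := by
      intro h0; rw [h0] at hr1sq; norm_num at hr1sq
    have h := hsum
    rw [ha0, hr1c, zero_mul] at h
    rcases mul_eq_zero.mp h.symm with h' | h'
    · exact hbne h'
    · exact hr1ne (by linear_combination h'/2)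
  -- the Hermitian form in the Jordan basis
  have hpeta2 : Ti*p*T = !![p1, p2; (b:ℂ), -p1] := by rw [hpeta, hE1]
  have hreta2 : Ti*r*T = !![r1, r2; (a:ℂ), -r1] := by rw [hreta, hE2]
  obtain ⟨HM, hHM⟩ : ∃ X : M2,
      X = !![(0:ℂ), (a:ℂ)*(b:ℂ); (a:ℂ)*(b:ℂ), -(a:ℂ)*(p1 + (starRingEnd ℂ) p1)] :=
    ⟨_, rfl⟩
  have hE3b : p1*p1 + p2*(b:ℂ) = 1 := by rw [← hE1]; exact hE3
  have hE4b : r1*r1 + r2*(a:ℂ) = 1 := by rw [← hE2]; exact hE4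
  have hHerm : HMᴴ = HM := by
    rw [hHM]
    ext i j
    fin_cases i <;> fin_cases j <;>
      simp [Matrix.conjTranspose_apply, Complex.star_def, map_add, _root_.map_mul, map_neg,
        Complex.conj_ofReal, Complex.conj_conj, -mul_eq_mul_left_iff, -mul_eq_mul_right_iff]
    all_goals first | ring1 | tauto
  have hWp : (!![p1, p2; (b:ℂ), -p1])ᴴ * HM = HM * !![p1, p2; (b:ℂ), -p1] := by
    rw [hHM]
    ext i j
    fin_cases i <;> fin_cases j <;>
      simp [Matrix.conjTranspose_apply, Matrix.mul_apply, Fin.sum_univ_two, Complex.star_def,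
        map_add, _root_.map_mul, map_neg, Complex.conj_ofReal, Complex.conj_conj, -mul_eq_mul_left_iff, -mul_eq_mul_right_iff]
    all_goals first
      | ring1
      | linear_combination (a:ℂ)*hE3c - (a:ℂ)*hE3b
      | linear_combination (a:ℂ)*hE3b - (a:ℂ)*hE3c
  have hWr : (!![r1, r2; (a:ℂ), -r1])ᴴ * HM = HM * !![r1, r2; (a:ℂ), -r1] := by
    rw [hHM]
    ext i j
    fin_cases i <;> fin_cases j <;>
      simp [Matrix.conjTranspose_apply, Matrix.mul_apply, Fin.sum_univ_two, Complex.star_def,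
        map_add, _root_.map_mul, map_neg, Complex.conj_ofReal, Complex.conj_conj, -mul_eq_mul_left_iff, -mul_eq_mul_right_iff]
    all_goals first
      | ring1
      | linear_combination (a:ℂ)*hsum
      | linear_combination -(a:ℂ)*hsum
      | linear_combination (b:ℂ)*hE4c - (b:ℂ)*hE4b - (r1 - (starRingEnd ℂ) r1)*hsum
      | linear_combination (b:ℂ)*hE4b - (b:ℂ)*hE4c + (r1 - (starRingEnd ℂ) r1)*hsum
      | linear_combination (b:ℂ)*hE4c - (b:ℂ)*hE4b + (r1 - (starRingEnd ℂ) r1)*hsum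
      | linear_combination (b:ℂ)*hE4b - (b:ℂ)*hE4c - (r1 - (starRingEnd ℂ) r1)*hsum
  have hCJ : (!![l, 1; (0:ℂ), l])ᴴ * HM * !![l, 1; (0:ℂ), l] = HM := by
    rw [hHM]
    ext i j
    fin_cases i <;> fin_cases j <;>
      simp [Matrix.conjTranspose_apply, Matrix.mul_apply, Fin.sum_univ_two, Complex.star_def,
        map_add, _root_.map_mul, map_neg, Complex.conj_ofReal, Complex.conj_conj, hconjl, -mul_eq_mul_left_iff, -mul_eq_mul_right_iff]
    all_goals first
      | ring1
      | linear_combination (a:ℂ)*(b:ℂ)*hl2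
      | linear_combination -(a:ℂ)*(b:ℂ)*hl2
      | linear_combination (a:ℂ)*(p1 + (starRingEnd ℂ) p1)*hl2
      | linear_combination -(a:ℂ)*(p1 + (starRingEnd ℂ) p1)*hl2
      | linear_combination ((a:ℂ)*(p1 + (starRingEnd ℂ) p1) + (a:ℂ)*(b:ℂ))*hl2
      | linear_combination ((a:ℂ)*(p1 + (starRingEnd ℂ) p1) - (a:ℂ)*(b:ℂ))*hl2
      | linear_combination (-(a:ℂ)*(p1 + (starRingEnd ℂ) p1) + (a:ℂ)*(b:ℂ))*hl2
      | linear_combination (-(a:ℂ)*(p1 + (starRingEnd ℂ) p1) - (a:ℂ)*(b:ℂ))*hl2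
  -- involution conditions in the Jordan basis
  have hppi : (Ti*p*T)*(Ti*p*T) = 1 := by
    rw [conj_sandwich hTTi, hp, mul_one, hTiT]
  have hrri : (Ti*r*T)*(Ti*r*T) = 1 := by
    rw [conj_sandwich hTTi, hr, mul_one, hTiT]
  have hCp : (Ti*p*T)ᴴ * HM * (Ti*p*T) = HM := by
    rw [hpeta2] at hppi ⊢
    rw [hWp, mul_assoc, hppi, mul_one]
  have hCr : (Ti*r*T)ᴴ * HM * (Ti*r*T) = HM := by
    rw [hreta2] at hrri ⊢
    rw [hWr, mul_assoc, hrri, mul_one]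
  have hq'eq : (Ti*p*T) * !![l, 1; (0:ℂ), l] * (Ti*r*T) = Ti*q*T := by
    rw [← hmT, conj_sandwich hTTi, conj_sandwich hTTi, hpmr]
  have hCq : (Ti*q*T)ᴴ * HM * (Ti*q*T) = HM := by
    rw [← hq'eq]
    exact prod3 hCp hCJ hCr
  -- transport back
  refine ⟨Tiᴴ * HM * Ti, ?_, ?_, ?_, ?_, ?_⟩
  · show (Tiᴴ * HM * Ti)ᴴ = Tiᴴ * HM * Ti
    calc (Tiᴴ * HM * Ti)ᴴ = Tiᴴ * (HMᴴ * (Tiᴴ)ᴴ) := by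
          simp only [Matrix.conjTranspose_mul, mul_assoc]
    _ = Tiᴴ * HM * Ti := by
          rw [hHerm, Matrix.conjTranspose_conjTranspose, mul_assoc]
  · have hdTi : Ti.det * T.det = 1 := by rw [← Matrix.det_mul, hTiT, Matrix.det_one]
    have hdTine : Ti.det ≠ 0 := left_ne_zero_of_mul_eq_one hdTi
    have hdHM : HM.det = -((a:ℂ)*(b:ℂ))^2 := by
      rw [hHM, Matrix.det_fin_two_of]; ring
    rw [Matrix.det_mul, Matrix.det_mul, Matrix.det_conjTranspose, hdHM]
    intro hcontra
    rcases mul_eq_zero.mp hcontra with h | h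
    · rcases mul_eq_zero.mp h with h' | h'
      · exact hdTine (by simpa using h')
      · have : (a:ℂ)*(b:ℂ) = 0 := by
          have := pow_eq_zero_iff (n := 2) (by norm_num) |>.mp (neg_eq_zero.mp h')
          exact this
        rcases mul_eq_zero.mp this with h'' | h''
        · exact hane h''
        · exact hbne h''
    · exact hdTine h
  · have := transport hTiT hCp
    rwa [unsandwich hTTi rfl] at this
  · have := transport hTiT hCq
    rwa [unsandwich hTTi rfl] at this
  · have := transport hTiT hCr
    rwa [unsandwich hTTi rfl] at this

end BeukersAux

open BeukersAux in
/-- Beukers' criterion: for three reflections `P, Q, R` whose product is parabolic, the group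
they generate is unitary iff `tr(PQ)`, `tr(QR)`, `tr(PR)` are real, iff `t₁ = tr(PQ)` and
`t₂ = tr(QR)` are real and `(t₁² - 4)(t₂² - 4) ≥ 16`. -/
theorem beukers_reflection_criterion (P Q R : GL (Fin 2) ℂ)
    (hPrefl : Matrix.trace (P : Matrix (Fin 2) (Fin 2) ℂ) = 0 ∧
      ((P : Matrix (Fin 2) (Fin 2) ℂ)).det = -1)
    (hQrefl : Matrix.trace (Q : Matrix (Fin 2) (Fin 2) ℂ) = 0 ∧
      ((Q : Matrix (Fin 2) (Fin 2) ℂ)).det = -1)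
    (hRrefl : Matrix.trace (R : Matrix (Fin 2) (Fin 2) ℂ) = 0 ∧
      ((R : Matrix (Fin 2) (Fin 2) ℂ)).det = -1)
    (hpar : ∃ l : ℂ, ‖l‖ = 1 ∧
      Matrix.trace ((P * Q * R : GL (Fin 2) ℂ) : Matrix (Fin 2) (Fin 2) ℂ) = 2 * l ∧
      (((P * Q * R : GL (Fin 2) ℂ) : Matrix (Fin 2) (Fin 2) ℂ)).det = l ^ 2 ∧
      ((P * Q * R : GL (Fin 2) ℂ) : Matrix (Fin 2) (Fin 2) ℂ) ≠ l • (1 : Matrix (Fin 2) (Fin 2) ℂ))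
    (G : Subgroup (GL (Fin 2) ℂ)) (hG : G = Subgroup.closure {P, Q, R}) :
    (IsUnitaryMatrixGroup {m : Matrix (Fin 2) (Fin 2) ℂ | ∃ g ∈ G, (g : Matrix (Fin 2) (Fin 2) ℂ) = m} ↔
      ((Matrix.trace ((P * Q : GL (Fin 2) ℂ) : Matrix (Fin 2) (Fin 2) ℂ)).im = 0 ∧
       (Matrix.trace ((Q * R : GL (Fin 2) ℂ) : Matrix (Fin 2) (Fin 2) ℂ)).im = 0 ∧
       (Matrix.trace ((P * R : GL (Fin 2) ℂ) : Matrix (Fin 2) (Fin 2) ℂ)).im = 0)) ∧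
    (IsUnitaryMatrixGroup {m : Matrix (Fin 2) (Fin 2) ℂ | ∃ g ∈ G, (g : Matrix (Fin 2) (Fin 2) ℂ) = m} ↔
      ∃ t₁ t₂ : ℝ,
        Matrix.trace ((P * Q : GL (Fin 2) ℂ) : Matrix (Fin 2) (Fin 2) ℂ) = (t₁ : ℂ) ∧
        Matrix.trace ((Q * R : GL (Fin 2) ℂ) : Matrix (Fin 2) (Fin 2) ℂ) = (t₂ : ℂ) ∧
        (t₁ ^ 2 - 4) * (t₂ ^ 2 - 4) ≥ 16) := by
  obtain ⟨htP, hdP⟩ := hPrefl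
  obtain ⟨htQ, hdQ⟩ := hQrefl
  obtain ⟨htR, hdR⟩ := hRrefl
  obtain ⟨l, _hl1, hltr, hldet, hlne⟩ := hpar
  have hcPQR : ((P*Q*R : GL (Fin 2) ℂ) : M2) = (P : M2) * (Q : M2) * (R : M2) := by
    simp [Units.val_mul]
  have hcPQ : ((P*Q : GL (Fin 2) ℂ) : M2) = (P : M2) * (Q : M2) := by simp [Units.val_mul]
  have hcQR : ((Q*R : GL (Fin 2) ℂ) : M2) = (Q : M2) * (R : M2) := by simp [Units.val_mul]
  have hcPR : ((P*R : GL (Fin 2) ℂ) : M2) = (P : M2) * (R : M2) := by simp [Units.val_mul]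
  rw [hcPQR] at hltr hldet hlne
  rw [hcPQ, hcQR, hcPR]
  have hpp := invol _ htP hdP
  have hqq := invol _ htQ hdQ
  have hrr := invol _ htR hdR
  have hident := trace_identity (P : M2) (Q : M2) (R : M2) hpp hqq hrr hdP hdQ hdR l hltr hldet
  have main2 : IsUnitaryMatrixGroup
      {m : Matrix (Fin 2) (Fin 2) ℂ | ∃ g ∈ G, (g : Matrix (Fin 2) (Fin 2) ℂ) = m} ↔
      ((((P : M2) * (Q : M2)).trace).im = 0 ∧ (((Q : M2) * (R : M2)).trace).im = 0 ∧
        (((P : M2) * (R : M2)).trace).im = 0) := by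
    constructor
    · rintro ⟨H, _hHerm, hHdet, hall⟩
      have hPmem : P ∈ G := by
        rw [hG]; exact Subgroup.subset_closure (by simp)
      have hQmem : Q ∈ G := by
        rw [hG]; exact Subgroup.subset_closure (by simp)
      have hRmem : R ∈ G := by
        rw [hG]; exact Subgroup.subset_closure (by simp)
      have hPc := hall _ ⟨P, hPmem, rfl⟩
      have hQc := hall _ ⟨Q, hQmem, rfl⟩
      have hRc := hall _ ⟨R, hRmem, rfl⟩
      exact ⟨real_trace_of_unitary _ _ H hpp hqq hHdet hPc hQc,
        real_trace_of_unitary _ _ H hqq hrr hHdet hQc hRc,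
        real_trace_of_unitary _ _ H hpp hrr hHdet hPc hRc⟩
    · rintro ⟨hx, hy, hz⟩
      obtain ⟨H, hHerm, hHdet, hCp, hCq, hCr⟩ :=
        construct (P : M2) (Q : M2) (R : M2) hpp hqq hrr htP htQ htR hdP hdQ hdR l
          hltr hldet hlne hx hy hz
      refine ⟨H, hHerm, hHdet, ?_⟩
      rintro m ⟨g, hgG, rfl⟩
      let K : Subgroup (GL (Fin 2) ℂ) :=
        { carrier := {g : GL (Fin 2) ℂ | (↑g : M2)ᴴ * H * ↑g = H}
          one_mem' := by simp
          mul_mem' := by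
            intro x y hx' hy'
            simp only [Set.mem_setOf_eq, Units.val_mul] at hx' hy' ⊢
            rw [sandwich_mul', hx', hy']
          inv_mem' := by
            intro x hx'
            simp only [Set.mem_setOf_eq] at hx' ⊢
            calc ((x⁻¹ : GL (Fin 2) ℂ) : M2)ᴴ*H*↑x⁻¹
                = ((x⁻¹ : GL (Fin 2) ℂ) : M2)ᴴ*((x : M2)ᴴ*H*↑x)*↑x⁻¹ := by rw [hx']
            _ = (((x : M2)*(↑x⁻¹ : M2)))ᴴ*H*((x : M2)*(↑x⁻¹ : M2)) := (sandwich_mul').symm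
            _ = H := by rw [x.mul_inv]; simp }
      have hKle : G ≤ K := by
        rw [hG]
        apply (Subgroup.closure_le K).mpr
        intro g' hg'
        simp only [Set.mem_insert_iff, Set.mem_singleton_iff] at hg'
        rcases hg' with rfl | rfl | rfl
        · exact hCp
        · exact hCq
        · exact hCr
      exact hKle hgG
  have iff23 : ((((P : M2) * (Q : M2)).trace).im = 0 ∧ (((Q : M2) * (R : M2)).trace).im = 0 ∧
      (((P : M2) * (R : M2)).trace).im = 0) ↔
      (∃ t₁ t₂ : ℝ, ((P : M2) * (Q : M2)).trace = (t₁ : ℂ) ∧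
        ((Q : M2) * (R : M2)).trace = (t₂ : ℂ) ∧ (t₁ ^ 2 - 4) * (t₂ ^ 2 - 4) ≥ 16) := by
    constructor
    · rintro ⟨hx, hy, hz⟩
      have hxa : ((P : M2) * (Q : M2)).trace = ((((P : M2) * (Q : M2)).trace.re : ℝ) : ℂ) := by
        apply Complex.ext <;> simp [hx]
      have hyb : ((Q : M2) * (R : M2)).trace = ((((Q : M2) * (R : M2)).trace.re : ℝ) : ℂ) := by
        apply Complex.ext <;> simp [hy]
      have hzc : ((P : M2) * (R : M2)).trace = ((((P : M2) * (R : M2)).trace.re : ℝ) : ℂ) := by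
        apply Complex.ext <;> simp [hz]
      set a := ((P : M2) * (Q : M2)).trace.re
      set b := ((Q : M2) * (R : M2)).trace.re
      set c := ((P : M2) * (R : M2)).trace.re
      refine ⟨a, b, hxa, hyb, ?_⟩
      have hreal : c^2 - a*b*c + a^2 + b^2 = 0 := by
        have h2 : ((c^2 - a*b*c + a^2 + b^2 : ℝ) : ℂ) = 0 := by
          push_cast
          rw [hxa, hyb, hzc] at hident
          linear_combination hident
        exact_mod_cast h2
      exact aux23a a b c hreal
    · rintro ⟨t₁, t₂, hx1, hy1, hineq⟩
      refine ⟨by rw [hx1]; simp, by rw [hy1]; simp, ?_⟩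
      apply aux23b t₁ t₂ (((P : M2) * (R : M2)).trace) ?_ hineq
      rw [hx1, hy1] at hident
      push_cast
      linear_combination hident
  exact ⟨main2, main2.trans iff23⟩
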